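/- Let ω₂ : ℕ → ℝ be positive with ω₂(n)/n increasing to infinity and ∑ 1/ω₂(n) = ∞. Define Φ(n) = exp(−∑_{k=1}^{n} 1/ω₂(k)). Then ∑_{k=1}^{n} Φ(k) = O(n·Φ(n)) as n → ∞. -/

import Mathlib

open Finset Filter

private lemma sum_inv_le_log (k : ℕ) (hk : 1 ≤ k) :
    ∀ n, k ≤ n → ∑ j ∈ Ioc k n, (1 : ℝ) / j ≤ Real.log n - Real.log k := by
  intro n hkn
  induction n, hkn using Nat.le_induction with
  | base => simp
  | succ n hn ih =>
    rw [Finset.sum_Ioc_succ_top hn]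
    have hn0 : (0 : ℝ) < n := by exact_mod_cast lt_of_lt_of_le hk hn
    have hn1 : (0 : ℝ) < (n : ℝ) + 1 := by linarith
    have hlog : Real.log ((n : ℝ) / ((n : ℝ) + 1)) ≤ (n : ℝ) / ((n : ℝ) + 1) - 1 :=
      Real.log_le_sub_one_of_pos (by positivity)
    rw [Real.log_div (ne_of_gt hn0) (ne_of_gt hn1)] at hlog
    have hdiv : (n : ℝ) / ((n : ℝ) + 1) - 1 = -(1 / ((n : ℝ) + 1)) := by
      field_simp
      ring
    rw [hdiv] at hlog
    push_cast
    push_cast at ih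
    linarith

private lemma sum_inv_sqrt_le (n : ℕ) :
    ∑ k ∈ Icc 1 n, 1 / Real.sqrt k ≤ 2 * Real.sqrt n := by
  induction n with
  | zero => simp
  | succ n ih =>
    rw [Finset.sum_Icc_succ_top (Nat.le_add_left 1 n)]
    have h1 : (0 : ℝ) ≤ n := Nat.cast_nonneg n
    have h2 : (0 : ℝ) < (n : ℝ) + 1 := by linarith
    have hs1 : Real.sqrt ((n : ℝ) + 1) > 0 := Real.sqrt_pos.mpr h2
    have hs2 : Real.sqrt (n : ℝ) ≥ 0 := Real.sqrt_nonneg _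
    have hsq1 : Real.sqrt ((n : ℝ) + 1) ^ 2 = (n : ℝ) + 1 := Real.sq_sqrt (le_of_lt h2)
    have hsq2 : Real.sqrt (n : ℝ) ^ 2 = (n : ℝ) := Real.sq_sqrt h1
    have hprod : Real.sqrt n * Real.sqrt ((n : ℝ) + 1) ≤ (n : ℝ) + 1 / 2 := by
      rw [← Real.sqrt_mul h1]
      have h3 : (n : ℝ) * ((n : ℝ) + 1) ≤ ((n : ℝ) + 1 / 2) ^ 2 := by nlinarith
      calc Real.sqrt ((n : ℝ) * ((n : ℝ) + 1)) ≤ Real.sqrt (((n : ℝ) + 1 / 2) ^ 2) :=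
            Real.sqrt_le_sqrt h3
        _ = (n : ℝ) + 1 / 2 := Real.sqrt_sq (by linarith)
    have key : 1 / Real.sqrt ((n : ℝ) + 1) ≤ 2 * (Real.sqrt ((n : ℝ) + 1) - Real.sqrt n) := by
      rw [div_le_iff₀ hs1]
      nlinarith
    push_cast
    linarith

theorem stmt0 (ω₂ : ℕ → ℝ)
    (hpos : ∀ n, 1 ≤ n → 0 < ω₂ n)
    (hmono : ∀ m n, 1 ≤ m → m ≤ n → ω₂ m / m ≤ ω₂ n / n)
    (htend : Tendsto (fun n : ℕ => ω₂ n / n) atTop atTop)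
    (hdiv : Tendsto (fun n : ℕ => ∑ k ∈ Icc 1 n, 1 / ω₂ k) atTop atTop)
    (Φ : ℕ → ℝ)
    (hΦ : ∀ n, Φ n = Real.exp (-(∑ k ∈ Icc 1 n, 1 / ω₂ k))) :
    ∃ C : ℝ, ∀ n, 1 ≤ n → ∑ k ∈ Icc 1 n, Φ k ≤ C * (n * Φ n) := by
  set S : ℕ → ℝ := fun n => ∑ k ∈ Icc 1 n, 1 / ω₂ k with hS
  -- get N with ω₂ j / j ≥ 2 for j ≥ N
  obtain ⟨N₀, hN₀⟩ := (htend.eventually_ge_atTop 2).exists_forall_of_atTop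
  set N := max N₀ 1 with hNdef
  have hN1 : 1 ≤ N := le_max_right _ _
  have hNbig : ∀ j, N ≤ j → 1 / ω₂ j ≤ 1 / (2 * j) := by
    intro j hj
    have hj1 : 1 ≤ j := le_trans hN1 hj
    have hjpos : (0 : ℝ) < j := by exact_mod_cast hj1
    have h2 : (2 : ℝ) ≤ ω₂ j / j := hN₀ j (le_trans (le_max_left _ _) hj)
    have hω : 2 * (j : ℝ) ≤ ω₂ j := (le_div_iff₀ hjpos).mp h2
    exact one_div_le_one_div_of_le (by positivity) hω
  have hinv_nonneg : ∀ j, 1 ≤ j → (0 : ℝ) ≤ 1 / ω₂ j := fun j hj => by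
    have := hpos j hj; positivity
  -- key pointwise bound on the tails
  have key : ∀ k n : ℕ, 1 ≤ k → k ≤ n →
      S n - S k ≤ S N + (Real.log n - Real.log k) / 2 := by
    intro k n hk hkn
    have hIcc : ∀ m : ℕ, Icc 1 m = Ioc 0 m := fun m => by
      rw [← Finset.Icc_add_one_left_eq_Ioc]
      rfl
    have hsplit : S k + ∑ j ∈ Ioc k n, 1 / ω₂ j = S n := by
      rw [hS]
      simp only [hIcc]
      exact Finset.sum_Ioc_consecutive _ (Nat.zero_le k) hkn
    have hdiff : S n - S k = ∑ j ∈ Ioc k n, 1 / ω₂ j := by linarith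
    rw [hdiff]
    have hbound : ∑ j ∈ Ioc k n, 1 / ω₂ j ≤
        ∑ j ∈ Ioc k n, ((if j ≤ N then 1 / ω₂ j else 0) + 1 / (2 * j)) := by
      apply Finset.sum_le_sum
      intro j hj
      rw [Finset.mem_Ioc] at hj
      have hj1 : 1 ≤ j := le_trans hk (le_of_lt hj.1)
      have hjpos : (0 : ℝ) < j := by exact_mod_cast hj1
      by_cases hjN : j ≤ N
      · rw [if_pos hjN]
        have : (0 : ℝ) ≤ 1 / (2 * j) := by positivity
        linarith
      · rw [if_neg hjN]
        have := hNbig j (le_of_lt (not_le.mp hjN))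
        linarith
    rw [Finset.sum_add_distrib] at hbound
    have h1 : ∑ j ∈ Ioc k n, (if j ≤ N then 1 / ω₂ j else 0) ≤ S N := by
      rw [← Finset.sum_filter]
      apply Finset.sum_le_sum_of_subset_of_nonneg
      · intro j hj
        simp only [Finset.mem_filter, Finset.mem_Ioc, Finset.mem_Icc] at hj ⊢
        exact ⟨le_trans hk (le_of_lt hj.1.1), hj.2⟩
      · intro j hj _
        exact hinv_nonneg j (Finset.mem_Icc.mp hj).1
    have h2 : ∑ j ∈ Ioc k n, (1 : ℝ) / (2 * j) ≤ (Real.log n - Real.log k) / 2 := by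
      have hlog := sum_inv_le_log k hk n hkn
      have heq : ∑ j ∈ Ioc k n, (1 : ℝ) / (2 * (j : ℝ)) =
          (∑ j ∈ Ioc k n, (1 : ℝ) / j) / 2 := by
        rw [Finset.sum_div]
        apply Finset.sum_congr rfl
        intro j _
        ring
      rw [heq]
      linarith
    linarith
  refine ⟨2 * Real.exp (S N), ?_⟩
  intro n hn
  have hn0 : (0 : ℝ) < n := by exact_mod_cast hn
  have hΦn : Φ n = Real.exp (-(S n)) := hΦ n
  have hterm : ∀ k ∈ Icc 1 n, Φ k ≤ Real.exp (S N) * Φ n * Real.sqrt n * (1 / Real.sqrt k) := by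
    intro k hk
    rw [Finset.mem_Icc] at hk
    have hk0 : (0 : ℝ) < k := by exact_mod_cast hk.1
    have hkey := key k n hk.1 hk.2
    have hΦk : Φ k = Real.exp (S n - S k) * Φ n := by
      rw [hΦ, hΦ, ← Real.exp_add]
      congr 1
      ring
    rw [hΦk]
    have hexp : Real.exp (S n - S k) ≤
        Real.exp (S N) * (Real.sqrt n / Real.sqrt k) := by
      have h1 : Real.exp (S n - S k) ≤
          Real.exp (S N + (Real.log n - Real.log k) / 2) := Real.exp_le_exp.mpr hkey
      rw [Real.exp_add] at h1
      have h2 : Real.exp ((Real.log n - Real.log k) / 2) = Real.sqrt n / Real.sqrt k := by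
        rw [← Real.sqrt_div (le_of_lt hn0), Real.sqrt_eq_rpow,
          Real.rpow_def_of_pos (by positivity), Real.log_div (ne_of_gt hn0) (ne_of_gt hk0)]
        ring_nf
      rw [h2] at h1
      exact h1
    have hΦnpos : 0 < Φ n := by rw [hΦn]; exact Real.exp_pos _
    calc Real.exp (S n - S k) * Φ n
        ≤ (Real.exp (S N) * (Real.sqrt n / Real.sqrt k)) * Φ n :=
          mul_le_mul_of_nonneg_right hexp (le_of_lt hΦnpos)
      _ = Real.exp (S N) * Φ n * Real.sqrt n * (1 / Real.sqrt k) := by ring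
  have hΦnpos : 0 < Φ n := by rw [hΦn]; exact Real.exp_pos _
  calc ∑ k ∈ Icc 1 n, Φ k
      ≤ ∑ k ∈ Icc 1 n, Real.exp (S N) * Φ n * Real.sqrt n * (1 / Real.sqrt k) :=
        Finset.sum_le_sum hterm
    _ = Real.exp (S N) * Φ n * Real.sqrt n * ∑ k ∈ Icc 1 n, 1 / Real.sqrt k := by
        rw [Finset.mul_sum]
    _ ≤ Real.exp (S N) * Φ n * Real.sqrt n * (2 * Real.sqrt n) := by
        apply mul_le_mul_of_nonneg_left (sum_inv_sqrt_le n)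
        positivity
    _ = 2 * Real.exp (S N) * (Real.sqrt n * Real.sqrt n * Φ n) := by ring
    _ = 2 * Real.exp (S N) * (n * Φ n) := by
        rw [Real.mul_self_sqrt (le_of_lt hn0)]
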